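/- Let σ be a permutation of size n ≥ 2 with br(σ) ≥ 3. Then the n patterns of size n−1 obtained by deleting a single entry of σ are pairwise distinct: σ_⟨{i}⟩ ≠ σ_⟨{j}⟩ for all distinct i, j ∈ {1,…,n} (that is, σ is 1-prolific). -/

import Mathlib

open Finset

namespace Prolific

/-- The L¹ ("taxicab") distance between the `i`th and `j`th entries of `σ`. -/
def dperm {n : ℕ} (σ : Equiv.Perm (Fin n)) (i j : Fin n) : ℕ :=
  Nat.dist (i : ℕ) (j : ℕ) + Nat.dist (σ i : ℕ) (σ j : ℕ)

/-- The breadth of a permutation: the minimum distance between two distinct entries. -/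
noncomputable def breadth {n : ℕ} (σ : Equiv.Perm (Fin n)) : ℕ :=
  sInf {d : ℕ | ∃ i j : Fin n, i ≠ j ∧ d = dperm σ i j}

/-- The pattern `σ_⟨A⟩` of `σ` obtained by deleting the entries in positions `A`. -/
noncomputable def pattern {n m : ℕ} (σ : Equiv.Perm (Fin n)) (A : Finset (Fin n))
    (h : Aᶜ.card = m) : Equiv.Perm (Fin m) :=
  (Aᶜ.orderIsoOfFin h).toEquiv.trans
    (((Equiv.subtypeEquiv (σ : Equiv.Perm (Fin n)) (fun a => by
        constructor
        · exact fun ha => Finset.mem_image_of_mem σ ha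
        · intro ha
          rcases Finset.mem_image.mp ha with ⟨x, hx, hxa⟩
          rwa [← σ.injective hxa])).trans
      ((Aᶜ.image σ).orderIsoOfFin
        (by rw [Finset.card_image_of_injective _ σ.injective, h])).toEquiv.symm))

/-- `σ_⟨A⟩ = σ_⟨B⟩` (in particular the two patterns have the same size). -/
def PatternEq {n : ℕ} (σ : Equiv.Perm (Fin n)) (A B : Finset (Fin n)) : Prop :=
  ∃ (m : ℕ) (hA : Aᶜ.card = m) (hB : Bᶜ.card = m), pattern σ A hA = pattern σ B hB

/-- `σ` is `k`-prolific: distinct `k`-element sets of positions produce distinct patterns. -/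
def IsProlific {n : ℕ} (k : ℕ) (σ : Equiv.Perm (Fin n)) : Prop :=
  ∀ A B : Finset (Fin n), A.card = k → B.card = k → A ≠ B → ¬ PatternEq σ A B


lemma pattern_lt_iff {n m : ℕ} (σ : Equiv.Perm (Fin n)) (A : Finset (Fin n))
    (h : Aᶜ.card = m) (s t : Fin m) :
    pattern σ A h s < pattern σ A h t ↔
      σ (Aᶜ.orderIsoOfFin h s) < σ (Aᶜ.orderIsoOfFin h t) := by
  simp only [pattern, Equiv.trans_apply, Equiv.subtypeEquiv_apply, RelIso.coe_fn_toEquiv,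
    ← OrderIso.toEquiv_symm]
  exact (((Aᶜ.image σ).orderIsoOfFin (by rw [Finset.card_image_of_injective _ σ.injective, h])).symm.lt_iff_lt).trans Subtype.mk_lt_mk

lemma key {m : ℕ} (σ : Equiv.Perm (Fin (m+1))) (i j : Fin (m+1)) (hij : i < j)
    (hA : ({i} : Finset (Fin (m+1)))ᶜ.card = m) (hB : ({j} : Finset (Fin (m+1)))ᶜ.card = m)
    (hp : pattern σ {i} hA = pattern σ {j} hB) : ∃ a b : Fin (m+1), a ≠ b ∧ dperm σ a b = 2 := by
  have hemb : ∀ (k : Fin (m+1)) (hk : ({k} : Finset (Fin (m+1)))ᶜ.card = m) (s : Fin m),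
      ((({k} : Finset (Fin (m+1)))ᶜ.orderIsoOfFin hk s : Fin (m+1))) = k.succAbove s := by
    intro k hk s
    have h2 := Finset.orderEmbOfFin_unique hk (f := fun s => k.succAbove s)
      (fun s => by simp [Fin.succAbove_ne]) (Fin.strictMono_succAbove k)
    rw [Finset.coe_orderIsoOfFin_apply, ← h2]
  have hiff : ∀ s t : Fin m,
      σ (i.succAbove s) < σ (i.succAbove t) ↔ σ (j.succAbove s) < σ (j.succAbove t) := by
    intro s t
    rw [← hemb i hA s, ← hemb i hA t, ← hemb j hB s, ← hemb j hB t,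
      ← pattern_lt_iff σ {i} hA s t, ← pattern_lt_iff σ {j} hB s t, hp]
  have hjm : (j : ℕ) ≤ m := Nat.lt_succ_iff.mp j.isLt
  have him : (i : ℕ) < m := lt_of_lt_of_le hij hjm
  set s₀ : Fin m := ⟨i, him⟩ with hs₀
  set p1 : Fin (m+1) := ⟨(i : ℕ) + 1, Nat.succ_lt_succ him⟩ with hp1
  have e1 : i.succAbove s₀ = p1 := by
    rw [Fin.succAbove_of_le_castSucc _ _ (by simp [Fin.le_def, hs₀])]
    rfl
  have e2 : j.succAbove s₀ = i := by
    have hlt : s₀.castSucc < j := by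
      rw [Fin.lt_def, Fin.coe_castSucc]
      exact hij
    rw [Fin.succAbove_of_castSucc_lt _ _ hlt]
    rfl
  set u : Fin (m+1) := σ i with hu
  set v : Fin (m+1) := σ p1 with hv
  set w : Fin (m+1) := σ j with hw
  have hNs : ∀ s : Fin m, (σ (i.succAbove s) < v ↔ σ (j.succAbove s) < u) := by
    intro s
    have := hiff s s₀
    rwa [e1, e2] at this
  have hNeq : ∑ s : Fin m, (if σ (i.succAbove s) < v then (1:ℕ) else 0)
      = ∑ s : Fin m, (if σ (j.succAbove s) < u then (1:ℕ) else 0) :=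
    Finset.sum_congr rfl (fun s _ => by rw [if_congr (hNs s) rfl rfl])
  have hcard : ∀ x : Fin (m+1), ∑ q : Fin (m+1), (if q < x then (1:ℕ) else 0) = (x : ℕ) := by
    intro x
    have h1 : (univ.filter (fun q : Fin (m+1) => q < x)) = Finset.Iio x := by
      ext q; simp
    rw [Finset.sum_boole, h1, Fin.card_Iio, Nat.cast_id]
  have S1 : (v : ℕ) = (if u < v then (1:ℕ) else 0)
      + ∑ s : Fin m, (if σ (i.succAbove s) < v then (1:ℕ) else 0) := by
    rw [← hcard v, ← Equiv.sum_comp σ (fun q => if q < v then (1:ℕ) else 0)]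
    exact Fin.sum_univ_succAbove (fun p => if σ p < v then (1:ℕ) else 0) i
  have S2 : (u : ℕ) = (if w < u then (1:ℕ) else 0)
      + ∑ s : Fin m, (if σ (j.succAbove s) < u then (1:ℕ) else 0) := by
    rw [← hcard u, ← Equiv.sum_comp σ (fun q => if q < u then (1:ℕ) else 0)]
    exact Fin.sum_univ_succAbove (fun p => if σ p < u then (1:ℕ) else 0) j
  have huv : u ≠ v := fun h => by
    have := σ.injective h
    simp [hp1] at this
    exact absurd (congrArg Fin.val this) (by simp)
  have hdist : Nat.dist (u : ℕ) (v : ℕ) = 1 := by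
    rw [hNeq] at S1
    have hne : (u : ℕ) ≠ (v : ℕ) := fun h => huv (Fin.ext h)
    rw [Nat.dist]
    split_ifs at S1 S2 with h1 h2 h2 <;>
      simp only [Fin.lt_def] at h1 h2 <;> omega
  refine ⟨i, p1, fun h => ?_, ?_⟩
  · exact absurd (congrArg Fin.val h) (by simp [hp1])
  · simp only [dperm, ← hu, ← hv, hp1, hdist]
    rw [hv, hp1] at hdist
    unfold Nat.dist at hdist
    simp [Nat.dist]
    omega

/-- If `br(σ) ≥ 3` then the `n` patterns of size `n - 1` obtained by deleting a single
entry of `σ` are pairwise distinct; that is, `σ` is `1`-prolific. -/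
theorem one_prolific_of_breadth {n : ℕ} (hn : 2 ≤ n) (σ : Equiv.Perm (Fin n))
    (hbr : 3 ≤ breadth σ) :
    (∀ i j : Fin n, i ≠ j → ¬ PatternEq σ ({i} : Finset (Fin n)) ({j} : Finset (Fin n))) ∧
    IsProlific 1 σ := by
  have key2 : ∀ i j : Fin n, i < j → ¬ PatternEq σ {i} {j} := by
    rintro i j hij ⟨m, hA, hB, hp⟩
    have hm : n = m + 1 := by
      have h1 := hA
      rw [Finset.card_compl, Finset.card_singleton, Fintype.card_fin] at h1
      omega
    subst hm
    obtain ⟨a, b, hab, hd⟩ := key σ i j hij hA hB hp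
    have hle : breadth σ ≤ 2 := Nat.sInf_le ⟨a, b, hab, hd.symm⟩
    omega
  have main : ∀ i j : Fin n, i ≠ j → ¬ PatternEq σ {i} {j} := by
    intro i j hne hpe
    rcases lt_or_gt_of_ne hne with h | h
    · exact key2 i j h hpe
    · obtain ⟨m, h1, h2, hp⟩ := hpe
      exact key2 j i h ⟨m, h2, h1, hp.symm⟩
  refine ⟨main, ?_⟩
  intro A B hA hB hne hpe
  obtain ⟨a, rfl⟩ := Finset.card_eq_one.mp hA
  obtain ⟨b, rfl⟩ := Finset.card_eq_one.mp hB
  exact main a b (fun h => hne (by rw [h])) hpe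


end Prolific
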